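/- As t ↑ T with x ∈ G^c fixed, the weight g_{α(x)}(t,x) of the unique nearest lattice point α(x) converges to 1, and consequently the h-transform drift Σ_{y ∈ π^{-1}(a)} g_y(t,x)(y − x)/(T − t) is asymptotically equivalent to the proposal drift (α(x) − x)/(T − t): their difference times (T − t) tends to 0. -/

import Mathlib

noncomputable section
open Classical Filter

/-- The plane with the Euclidean norm. -/
abbrev E2 := EuclideanSpace ℝ (Fin 2)

/-- The lattice-translate point `a + (m,n)` for `(m,n) ∈ ℤ²`. -/
def lpt (a : E2) (mn : ℤ × ℤ) : E2 :=
  a + (EuclideanSpace.equiv (Fin 2) ℝ).symm ![(mn.1 : ℝ), (mn.2 : ℝ)]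

/-- The preimage `π⁻¹(a)` as a set. -/
def latt (a : E2) : Set E2 := Set.range (lpt a)

/-- The set `G` of points of `ℝ²` whose nearest point in `π⁻¹(a)` is not unique. -/
def G (a : E2) : Set E2 :=
  {x | ¬ ∃! y, y ∈ latt a ∧ ∀ z ∈ latt a, ‖y - x‖ ≤ ‖z - x‖}

/-- The nearest-point map `α`. -/
def alphaMap (a : E2) (x : E2) : E2 :=
  Classical.epsilon (fun y => y ∈ latt a ∧ ∀ z ∈ latt a, ‖y - x‖ ≤ ‖z - x‖)

/-- The Gaussian lattice sum `Σ_{y ∈ π⁻¹(a)} exp(-‖y-x‖²/(2σ²(T-t)))`. -/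
def Zsum (a : E2) (σ T t : ℝ) (x : E2) : ℝ :=
  ∑' mn : ℤ × ℤ, Real.exp (-‖lpt a mn - x‖^2 / (2 * σ^2 * (T - t)))

/-- The weight `g_y(t,x)` of the lattice point `y`. -/
def gpt (a : E2) (σ T : ℝ) (y : E2) (t : ℝ) (x : E2) : ℝ :=
  Real.exp (-‖y - x‖^2 / (2 * σ^2 * (T - t))) / Zsum a σ T t x

/-! ### Auxiliary lemmas -/

lemma lpt_apply_zero (a : E2) (mn : ℤ × ℤ) : lpt a mn 0 = a 0 + mn.1 := rfl
lemma lpt_apply_one (a : E2) (mn : ℤ × ℤ) : lpt a mn 1 = a 1 + mn.2 := rfl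

lemma lpt_inj (a : E2) : Function.Injective (lpt a) := by
  intro p q h
  have h0 : lpt a p 0 = lpt a q 0 := by rw [h]
  have h1 : lpt a p 1 = lpt a q 1 := by rw [h]
  rw [lpt_apply_zero, lpt_apply_zero] at h0
  rw [lpt_apply_one, lpt_apply_one] at h1
  have e1 : (p.1:ℝ) = q.1 := by linarith
  have e2 : (p.2:ℝ) = q.2 := by linarith
  exact Prod.ext (by exact_mod_cast e1) (by exact_mod_cast e2)

lemma sq_coord_ge (u m R : ℝ) (hR : 0 ≤ R) (h : |u - m| ≤ R) :
    |m| - (R+1)^2 ≤ u^2 := by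
  have hm : |m| ≤ |u| + R := by
    have : |m| ≤ |u| + |u - m| := by
      cases abs_cases m <;> cases abs_cases u <;> cases abs_cases (u - m) <;> linarith
    linarith
  rcases le_or_gt (|u|) (R+1) with h1 | h1
  · nlinarith [sq_nonneg u, abs_nonneg u]
  · have h2 : u^2 = |u|^2 := (sq_abs u).symm
    nlinarith [abs_nonneg u]

lemma norm_sq_coords (w : E2) : w 0 ^ 2 + w 1 ^ 2 = ‖w‖ ^ 2 := by
  rw [EuclideanSpace.norm_eq, Real.sq_sqrt (by positivity)]
  simp [Fin.sum_univ_two, sq_abs]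

lemma abs_coord_le (w : E2) (j : Fin 2) : |w j| ≤ ‖w‖ := by
  have h := norm_sq_coords w
  fin_cases j
  · show |w 0| ≤ ‖w‖
    nlinarith [norm_nonneg w, abs_nonneg (w 0), sq_abs (w 0), sq_abs (w 1), sq_nonneg (w 1)]
  · show |w 1| ≤ ‖w‖
    nlinarith [norm_nonneg w, abs_nonneg (w 1), sq_abs (w 0), sq_abs (w 1), sq_nonneg (w 0)]

lemma lpt_lower (a x : E2) (mn : ℤ × ℤ) :
    (|(mn.1:ℝ)| - (‖a - x‖+1)^2) + (|(mn.2:ℝ)| - (‖a - x‖+1)^2) ≤ ‖lpt a mn - x‖^2 := by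
  set w := lpt a mn - x with hw
  have h0 : w 0 - (mn.1:ℝ) = (a - x) 0 := by
    show (lpt a mn 0 - x 0) - _ = a 0 - x 0
    rw [lpt_apply_zero]; ring
  have h1 : w 1 - (mn.2:ℝ) = (a - x) 1 := by
    show (lpt a mn 1 - x 1) - _ = a 1 - x 1
    rw [lpt_apply_one]; ring
  have hR : (0:ℝ) ≤ ‖a - x‖ := norm_nonneg _
  have c0 : |(mn.1:ℝ)| - (‖a - x‖+1)^2 ≤ w 0 ^ 2 :=
    sq_coord_ge _ _ _ hR (by rw [h0]; exact abs_coord_le (a - x) 0)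
  have c1 : |(mn.2:ℝ)| - (‖a - x‖+1)^2 ≤ w 1 ^ 2 :=
    sq_coord_ge _ _ _ hR (by rw [h1]; exact abs_coord_le (a - x) 1)
  have := norm_sq_coords w
  linarith

lemma summable_exp_abs (c : ℝ) (hc : 0 < c) :
    Summable fun m : ℤ => Real.exp (-(c * |(m:ℝ)|)) := by
  apply Summable.of_nat_of_neg <;>
  · simp only [Int.cast_natCast, Int.cast_neg, abs_neg, Nat.abs_cast]
    have h : ∀ n : ℕ, Real.exp (-(c * (n:ℝ))) = Real.exp (-c) ^ n := by
      intro n; rw [← Real.exp_nat_mul]; ring_nf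
    exact (summable_geometric_of_lt_one (Real.exp_nonneg _)
      (Real.exp_lt_one_iff.mpr (by linarith))).congr (fun n => (h n).symm)

lemma summable_gauss (a x : E2) {c : ℝ} (hc : 0 < c) :
    Summable fun mn : ℤ × ℤ => Real.exp (-(c * ‖lpt a mn - x‖ ^ 2)) := by
  set R := ‖a - x‖ with hR
  have hprod : Summable fun mn : ℤ × ℤ =>
      Real.exp (-(c * |(mn.1:ℝ)|)) * Real.exp (-(c * |(mn.2:ℝ)|)) :=
    (summable_exp_abs c hc).mul_of_nonneg (summable_exp_abs c hc)
      (fun _ => Real.exp_nonneg _) (fun _ => Real.exp_nonneg _)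
  apply Summable.of_norm_bounded (hprod.mul_left (Real.exp (2*c*(R+1)^2))) (fun mn => ?_)
  rw [Real.norm_eq_abs, abs_of_nonneg (Real.exp_nonneg _), ← Real.exp_add, ← Real.exp_add]
  apply Real.exp_le_exp.mpr
  have h := lpt_lower a x mn
  nlinarith [hc.le]

lemma r_exp_le (b r : ℝ) (hb : 0 < b) (hr : 0 ≤ r) : r * Real.exp (-(b * r ^ 2)) ≤ 1 + 1 / b := by
  rcases le_or_gt r 1 with h | h
  · have h1 : Real.exp (-(b * r ^ 2)) ≤ 1 := Real.exp_le_one_iff.mpr (by nlinarith)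
    nlinarith [one_div_nonneg.mpr hb.le]
  · have h1 : r ≤ r ^ 2 := by nlinarith
    have h2 : Real.exp (-(b * r ^ 2)) ≤ Real.exp (-(b * r)) := by
      apply Real.exp_le_exp.mpr; nlinarith
    have h3 : b * r ≤ Real.exp (b * r) := by
      have := Real.add_one_le_exp (b * r); linarith
    have h4 : Real.exp (-(b*r)) ≤ (b*r)⁻¹ := by
      rw [Real.exp_neg]
      exact inv_anti₀ (by positivity) h3
    have h5 : r * Real.exp (-(b*r^2)) ≤ r * (b*r)⁻¹ :=
      mul_le_mul_of_nonneg_left (h2.trans h4) (by linarith)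
    have h6 : r * (b*r)⁻¹ = 1/b := by field_simp
    rw [h6] at h5
    linarith

lemma summable_gauss_wt (a x p : E2) {c : ℝ} (hc : 0 < c) :
    Summable fun mn : ℤ × ℤ => Real.exp (-(c * ‖lpt a mn - x‖ ^ 2)) * ‖lpt a mn - p‖ := by
  have h2 := summable_gauss a x (half_pos hc)
  apply Summable.of_norm_bounded (h2.mul_left (‖x - p‖ + (1 + 1/(c/2)))) (fun mn => ?_)
  set r := ‖lpt a mn - x‖ with hr
  have hrn : 0 ≤ r := norm_nonneg _
  have h1 : ‖lpt a mn - p‖ ≤ r + ‖x - p‖ := by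
    have h := norm_add_le (lpt a mn - x) (x - p)
    have he : lpt a mn - x + (x - p) = lpt a mn - p := by abel
    rw [he] at h; exact h
  have h3 : Real.exp (-(c * r^2)) = Real.exp (-(c/2 * r^2)) * Real.exp (-(c/2 * r^2)) := by
    rw [← Real.exp_add]; ring_nf
  have h4 : r * Real.exp (-(c/2 * r^2)) ≤ 1 + 1/(c/2) := r_exp_le _ _ (half_pos hc) hrn
  have h5 : Real.exp (-(c/2 * r^2)) ≤ 1 := Real.exp_le_one_iff.mpr (by nlinarith)
  rw [Real.norm_eq_abs, abs_of_nonneg (mul_nonneg (Real.exp_nonneg _) (norm_nonneg _))]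
  have he2 : (0:ℝ) ≤ Real.exp (-(c/2 * r^2)) := Real.exp_nonneg _
  calc Real.exp (-(c * r^2)) * ‖lpt a mn - p‖
      ≤ Real.exp (-(c * r^2)) * (r + ‖x - p‖) :=
        mul_le_mul_of_nonneg_left h1 (Real.exp_nonneg _)
    _ = (r * Real.exp (-(c/2 * r^2))) * Real.exp (-(c/2 * r^2))
        + ‖x - p‖ * (Real.exp (-(c/2 * r^2)) * Real.exp (-(c/2 * r^2))) := by rw [h3]; ring
    _ ≤ (‖x - p‖ + (1 + 1/(c/2))) * Real.exp (-(c/2 * r^2)) := by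
        nlinarith [mul_le_mul_of_nonneg_left h4 he2, norm_nonneg (x - p), he2, h5,
          mul_nonneg (mul_nonneg (sub_nonneg.mpr h5) he2) (norm_nonneg (x - p))]

/-- for fixed `x ∈ Gᶜ`, as `t ↑ T` the weight `g_{α(x)}(t,x)` of the
unique nearest lattice point tends to `1`, and the difference between the
`h`-transform drift `Σ_y g_y(t,x)(y-x)/(T-t)` and the proposal drift
`(α(x)-x)/(T-t)`, multiplied by `(T-t)`, tends to `0`. -/
theorem stmt15 (a : E2) (σ T : ℝ) (hσ : 0 < σ) (hT : 0 < T) (x : E2) (hx : x ∉ G a) :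
    Tendsto (fun t => gpt a σ T (alphaMap a x) t x)
      (nhdsWithin T (Set.Iio T)) (nhds 1) ∧
    Tendsto (fun t =>
        (∑' mn : ℤ × ℤ, gpt a σ T (lpt a mn) t x • (lpt a mn - x))
          - (alphaMap a x - x))
      (nhdsWithin T (Set.Iio T)) (nhds 0) := by
  classical
  have hexu : ∃! y, y ∈ latt a ∧ ∀ z ∈ latt a, ‖y - x‖ ≤ ‖z - x‖ := not_not.mp hx
  have hαspec : alphaMap a x ∈ latt a ∧ ∀ z ∈ latt a, ‖alphaMap a x - x‖ ≤ ‖z - x‖ :=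
    Classical.epsilon_spec hexu.exists
  set α := alphaMap a x with hαdef
  obtain ⟨mn₀, hmn₀⟩ := hαspec.1
  set F0 := ‖lpt a mn₀ - x‖ ^ 2 with hF0
  have hfmin : ∀ mn : ℤ × ℤ, F0 ≤ ‖lpt a mn - x‖ ^ 2 := by
    intro mn
    have h := hαspec.2 (lpt a mn) ⟨mn, rfl⟩
    rw [hF0, hmn₀]
    exact pow_le_pow_left₀ (norm_nonneg _) h 2
  have hstrict : ∀ mn : ℤ × ℤ, mn ≠ mn₀ → F0 < ‖lpt a mn - x‖ ^ 2 := by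
    intro mn hne
    rcases lt_or_eq_of_le (hfmin mn) with h | h
    · exact h
    · exfalso
      have hnorm : ‖lpt a mn - x‖ = ‖α - x‖ := by
        rw [← Real.sqrt_sq (norm_nonneg (lpt a mn - x)), ← Real.sqrt_sq (norm_nonneg (α - x))]
        rw [← hmn₀, ← h, hF0]
      have hP : lpt a mn ∈ latt a ∧ ∀ z ∈ latt a, ‖lpt a mn - x‖ ≤ ‖z - x‖ :=
        ⟨⟨mn, rfl⟩, fun z hz => by rw [hnorm]; exact hαspec.2 z hz⟩
      have heq : lpt a mn = α := hexu.unique hP hαspec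
      exact hne (lpt_inj a (heq.trans hmn₀.symm))
  obtain ⟨δ, hδpos, hδ1, hδ⟩ :
      ∃ δ : ℝ, 0 < δ ∧ δ ≤ 1 ∧ ∀ mn : ℤ × ℤ, mn ≠ mn₀ → F0 + δ ≤ ‖lpt a mn - x‖ ^ 2 := by
    set B := F0 + 1 + 2*(‖a - x‖+1)^2 with hB
    have hbox : ∀ mn : ℤ × ℤ, ‖lpt a mn - x‖ ^ 2 ≤ F0 + 1 →
        |(mn.1:ℝ)| ≤ B ∧ |(mn.2:ℝ)| ≤ B := by
      intro mn h
      have hl := lpt_lower a x mn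
      constructor
      · nlinarith [abs_nonneg ((mn.2:ℝ))]
      · nlinarith [abs_nonneg ((mn.1:ℝ))]
    set N : ℤ := ⌈B⌉ with hN
    have hfin : {mn : ℤ × ℤ | mn ≠ mn₀ ∧ ‖lpt a mn - x‖ ^ 2 ≤ F0 + 1}.Finite := by
      apply Set.Finite.subset (Set.finite_Icc (-N, -N) (N, N))
      rintro mn ⟨_, hmn⟩
      obtain ⟨h1, h2⟩ := hbox mn hmn
      have hc1 : |mn.1| ≤ N := by
        have : |(mn.1:ℝ)| ≤ (N:ℝ) := h1.trans (Int.le_ceil _)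
        exact_mod_cast this
      have hc2 : |mn.2| ≤ N := by
        have : |(mn.2:ℝ)| ≤ (N:ℝ) := h2.trans (Int.le_ceil _)
        exact_mod_cast this
      rw [Set.mem_Icc]
      obtain ⟨ha1, hb1⟩ := abs_le.mp hc1
      obtain ⟨ha2, hb2⟩ := abs_le.mp hc2
      exact ⟨⟨ha1, ha2⟩, ⟨hb1, hb2⟩⟩
    set Sf := hfin.toFinset with hSf
    by_cases hne : Sf.Nonempty
    · refine ⟨min 1 (Sf.inf' hne fun mn => ‖lpt a mn - x‖ ^ 2 - F0), ?_, min_le_left _ _, ?_⟩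
      · apply lt_min one_pos
        rw [Finset.lt_inf'_iff]
        intro mn hmn
        have : mn ≠ mn₀ := ((hfin.mem_toFinset).mp hmn).1
        have := hstrict mn this
        linarith
      · intro mn hmn
        by_cases hmem : mn ∈ Sf
        · have h1 : Sf.inf' hne (fun mn => ‖lpt a mn - x‖ ^ 2 - F0) ≤ ‖lpt a mn - x‖ ^ 2 - F0 :=
            Finset.inf'_le _ hmem
          have h2 := min_le_right 1 (Sf.inf' hne fun mn => ‖lpt a mn - x‖ ^ 2 - F0)
          linarith
        · have : ¬ (‖lpt a mn - x‖ ^ 2 ≤ F0 + 1) := by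
            intro hcon
            exact hmem ((hfin.mem_toFinset).mpr ⟨hmn, hcon⟩)
          have h2 := min_le_left 1 (Sf.inf' hne fun mn => ‖lpt a mn - x‖ ^ 2 - F0)
          push_neg at this
          linarith
    · refine ⟨1, one_pos, le_refl _, fun mn hmn => ?_⟩
      have : mn ∉ Sf := fun h => hne ⟨mn, h⟩
      have : ¬ (‖lpt a mn - x‖ ^ 2 ≤ F0 + 1) := by
        intro hcon
        exact this ((hfin.mem_toFinset).mpr ⟨hmn, hcon⟩)
      push_neg at this
      linarith
    -- analytic setup
  have hdpos : ∀ t : ℝ, t < T → 0 < 2 * σ ^ 2 * (T - t) := fun t ht =>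
    mul_pos (by positivity) (sub_pos.mpr ht)
  have hsume : ∀ t : ℝ, t < T →
      Summable fun mn : ℤ × ℤ => Real.exp (-‖lpt a mn - x‖ ^ 2 / (2 * σ ^ 2 * (T - t))) := by
    intro t ht
    refine (summable_gauss a x (c := (2 * σ ^ 2 * (T - t))⁻¹)
      (inv_pos.mpr (hdpos t ht))).congr fun mn => ?_
    congr 1; ring
  set H : ℝ → ℤ × ℤ → ℝ :=
    fun t mn => Real.exp (-(‖lpt a mn - x‖ ^ 2 - F0) / (2 * σ ^ 2 * (T - t))) with hHdef
  have hsumH : ∀ t : ℝ, t < T → Summable (H t) := by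
    intro t ht
    refine ((hsume t ht).mul_left (Real.exp (F0 / (2 * σ ^ 2 * (T - t))))).congr fun mn => ?_
    rw [← Real.exp_add]; congr 1; ring
  have hZeq : ∀ t : ℝ, t < T →
      Zsum a σ T t x = Real.exp (-F0 / (2 * σ ^ 2 * (T - t))) * ∑' mn, H t mn := by
    intro t ht
    rw [show Zsum a σ T t x
      = ∑' mn : ℤ × ℤ, Real.exp (-‖lpt a mn - x‖^2 / (2 * σ^2 * (T - t))) from rfl,
      ← tsum_mul_left]
    exact tsum_congr fun mn => by rw [← Real.exp_add]; congr 1; ring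
  have hZpos : ∀ t : ℝ, t < T → 0 < Zsum a σ T t x := fun t ht =>
    Summable.tsum_pos (hsume t ht) (fun mn => Real.exp_nonneg _) mn₀ (Real.exp_pos _)
  set L := nhdsWithin T (Set.Iio T) with hLdef
  -- pointwise limits of H
  have hH0 : ∀ mn : ℤ × ℤ, mn ≠ mn₀ → Tendsto (fun t => H t mn) L (nhds 0) := by
    intro mn hne
    have hu : 0 < ‖lpt a mn - x‖ ^ 2 - F0 := sub_pos.mpr (hstrict mn hne)
    have h1 : Tendsto (fun t : ℝ => T - t) L (nhdsWithin 0 (Set.Ioi 0)) := by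
      rw [tendsto_nhdsWithin_iff]
      constructor
      · have h : Tendsto (fun t : ℝ => T - t) (nhds T) (nhds (T - T)) :=
          ((continuous_const).sub continuous_id).tendsto T
        rw [sub_self] at h
        exact h.mono_left nhdsWithin_le_nhds
      · filter_upwards [self_mem_nhdsWithin] with t ht
        exact Set.mem_Ioi.mpr (sub_pos.mpr ht)
    have h2 : Tendsto (fun t : ℝ => (T - t)⁻¹) L atTop :=
      tendsto_inv_nhdsGT_zero.comp h1
    have hneg : (-((‖lpt a mn - x‖ ^ 2 - F0) / (2 * σ ^ 2))) < 0 :=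
      neg_lt_zero.mpr (div_pos hu (by positivity))
    have h3 := Tendsto.const_mul_atTop_of_neg hneg h2
    have h4 := Real.tendsto_exp_atBot.comp h3
    refine h4.congr fun t => ?_
    simp only [Function.comp_apply]
    congr 1
    simp only [div_eq_mul_inv, mul_inv, neg_mul, neg_sub]
    ring
  have hH1 : Tendsto (fun t => H t mn₀) L (nhds 1) := by
    have h : ∀ t, H t mn₀ = 1 := fun t => by
      simp only [hHdef]
      rw [← hF0, sub_self, neg_zero, zero_div, Real.exp_zero]
    exact tendsto_const_nhds.congr fun t => (h t).symm
  -- dominating function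
  set bound : ℤ × ℤ → ℝ :=
    fun mn => Real.exp (-(‖lpt a mn - x‖ ^ 2 - F0) / (2 * σ ^ 2 * T)) with hbdef
  have hbsum : Summable bound := by
    refine ((summable_gauss a x (c := (2*σ^2*T)⁻¹) (inv_pos.mpr (by positivity))).mul_left
      (Real.exp (F0 / (2 * σ ^ 2 * T)))).congr fun mn => ?_
    rw [← Real.exp_add]
    simp only [hbdef]
    congr 1; ring
  have hbev : ∀ᶠ t in L, ∀ mn : ℤ × ℤ, ‖H t mn‖ ≤ bound mn := by
    have hgt : ∀ᶠ t in L, 0 < t := (eventually_gt_nhds hT).filter_mono nhdsWithin_le_nhds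
    filter_upwards [hgt, self_mem_nhdsWithin] with t ht0 htT mn
    rw [Real.norm_eq_abs, abs_of_nonneg (Real.exp_nonneg _)]
    simp only [hHdef, hbdef]
    apply Real.exp_le_exp.mpr
    rw [neg_div, neg_div, neg_le_neg_iff]
    have hu : 0 ≤ ‖lpt a mn - x‖ ^ 2 - F0 := sub_nonneg.mpr (hfmin mn)
    have hd1 : 0 < 2*σ^2*(T - t) := hdpos t htT
    have hd2 : 2*σ^2*(T-t) ≤ 2*σ^2*T := by nlinarith [sq_nonneg σ]
    exact div_le_div_of_nonneg_left hu hd1 hd2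
  -- convergence of the normalized partition sum
  have hDlim : Tendsto (fun t => ∑' mn, H t mn) L (nhds 1) := by
    have hab : ∀ mn : ℤ × ℤ, Tendsto (fun t => H t mn) L
        (nhds (if mn = mn₀ then (1:ℝ) else 0)) := by
      intro mn
      by_cases hmn : mn = mn₀
      · subst hmn; simp only [if_pos]; exact hH1
      · simp only [if_neg hmn]; exact hH0 mn hmn
    have h := tendsto_tsum_of_dominated_convergence (𝓕 := L) (f := H)
      (g := fun mn => if mn = mn₀ then (1:ℝ) else 0) (bound := bound) hbsum hab hbev
    rwa [tsum_ite_eq] at h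
  -- part (a)
  have parta : Tendsto (fun t => gpt a σ T α t x) L (nhds 1) := by
    have h1 : Tendsto (fun t => (∑' mn, H t mn)⁻¹) L (nhds 1) := by
      have h := hDlim.inv₀ one_ne_zero
      rwa [inv_one] at h
    refine h1.congr' ?_
    filter_upwards [self_mem_nhdsWithin] with t ht
    have hαx : ‖α - x‖ ^ 2 = F0 := by rw [hF0, hmn₀]
    symm
    rw [show gpt a σ T α t x
      = Real.exp (-‖α - x‖^2 / (2 * σ^2 * (T - t))) / Zsum a σ T t x from rfl]
    rw [hαx, hZeq t ht, ← div_div, div_self (Real.exp_ne_zero _), one_div]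
  -- part (b) : weighted sums
  have hWa : ∀ t : ℝ, t < T → Summable (fun mn => H t mn * ‖lpt a mn - α‖) := by
    intro t ht
    refine ((summable_gauss_wt a x α (c := (2*σ^2*(T-t))⁻¹)
      (inv_pos.mpr (hdpos t ht))).mul_left
      (Real.exp (F0 / (2*σ^2*(T-t))))).congr fun mn => ?_
    rw [← mul_assoc, ← Real.exp_add]
    simp only [hHdef]
    congr 2
    ring
  have hWlim : Tendsto (fun t => ∑' mn, H t mn * ‖lpt a mn - α‖) L (nhds 0) := by
    have hbsum2 : Summable (fun mn => bound mn * ‖lpt a mn - α‖) := by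
      refine ((summable_gauss_wt a x α (c := (2*σ^2*T)⁻¹)
        (inv_pos.mpr (by positivity))).mul_left
        (Real.exp (F0 / (2*σ^2*T)))).congr fun mn => ?_
      rw [← mul_assoc, ← Real.exp_add]
      simp only [hbdef]
      congr 2
      ring
    have hab : ∀ mn : ℤ × ℤ, Tendsto (fun t => H t mn * ‖lpt a mn - α‖) L (nhds 0) := by
      intro mn
      by_cases hmn : mn = mn₀
      · have h0 : ∀ t : ℝ, H t mn * ‖lpt a mn - α‖ = 0 := fun t => by
          rw [hmn, hmn₀, sub_self, norm_zero, mul_zero]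
        exact tendsto_const_nhds.congr fun t => (h0 t).symm
      · simpa using (hH0 mn hmn).mul_const ‖lpt a mn - α‖
    have hbd : ∀ᶠ t in L, ∀ mn : ℤ × ℤ, ‖H t mn * ‖lpt a mn - α‖‖
        ≤ bound mn * ‖lpt a mn - α‖ := by
      filter_upwards [hbev] with t hbt mn
      rw [Real.norm_eq_abs, abs_of_nonneg (mul_nonneg (Real.exp_nonneg _) (norm_nonneg _))]
      have hb := hbt mn
      rw [Real.norm_eq_abs, abs_of_nonneg (Real.exp_nonneg _)] at hb
      exact mul_le_mul_of_nonneg_right hb (norm_nonneg _)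
    have h := tendsto_tsum_of_dominated_convergence (𝓕 := L)
      (f := fun t mn => H t mn * ‖lpt a mn - α‖)
      (g := fun _ => (0:ℝ)) (bound := fun mn => bound mn * ‖lpt a mn - α‖) hbsum2 hab hbd
    rwa [tsum_zero] at h
  have partb : Tendsto (fun t =>
      (∑' mn : ℤ × ℤ, gpt a σ T (lpt a mn) t x • (lpt a mn - x)) - (α - x)) L (nhds 0) := by
    apply squeeze_zero_norm' ?_ hWlim
    filter_upwards [self_mem_nhdsWithin] with t ht
    have hZp := hZpos t ht
    have hgdef : ∀ mn : ℤ × ℤ, gpt a σ T (lpt a mn) t x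
        = Real.exp (-‖lpt a mn - x‖^2/(2*σ^2*(T-t))) / Zsum a σ T t x := fun mn => rfl
    have hgnn : ∀ mn : ℤ × ℤ, 0 ≤ gpt a σ T (lpt a mn) t x := fun mn =>
      div_nonneg (Real.exp_nonneg _) hZp.le
    have hsg : Summable (fun mn : ℤ × ℤ => gpt a σ T (lpt a mn) t x) := by
      refine ((hsume t ht).mul_right (Zsum a σ T t x)⁻¹).congr fun mn => ?_
      rw [hgdef mn]
      exact (div_eq_mul_inv _ _).symm
    have hsgn : ∀ p : E2,
        Summable (fun mn : ℤ × ℤ => gpt a σ T (lpt a mn) t x * ‖lpt a mn - p‖) := by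
      intro p
      refine (((summable_gauss_wt a x p (c := (2*σ^2*(T-t))⁻¹)
        (inv_pos.mpr (hdpos t ht))).mul_right (Zsum a σ T t x)⁻¹).congr fun mn => ?_)
      rw [hgdef mn, div_eq_mul_inv,
        show Real.exp (-((2*σ^2*(T-t))⁻¹ * ‖lpt a mn - x‖^2))
          = Real.exp (-‖lpt a mn - x‖^2/(2*σ^2*(T-t))) from by congr 1; ring]
      ring
    have hsv : Summable (fun mn : ℤ × ℤ => gpt a σ T (lpt a mn) t x • (lpt a mn - x)) := by
      apply Summable.of_norm_bounded (hsgn x) fun mn => ?_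
      rw [norm_smul, Real.norm_eq_abs, abs_of_nonneg (hgnn mn)]
    have hts1 : ∑' mn : ℤ × ℤ, gpt a σ T (lpt a mn) t x = 1 := by
      calc ∑' mn : ℤ × ℤ, gpt a σ T (lpt a mn) t x
          = ∑' mn : ℤ × ℤ, Real.exp (-‖lpt a mn - x‖^2/(2*σ^2*(T-t))) / Zsum a σ T t x :=
            tsum_congr hgdef
        _ = (∑' mn : ℤ × ℤ, Real.exp (-‖lpt a mn - x‖^2/(2*σ^2*(T-t)))) / Zsum a σ T t x :=
            tsum_div_const
        _ = Zsum a σ T t x / Zsum a σ T t x := rfl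
        _ = 1 := div_self hZp.ne'
    have hsc : Summable (fun mn : ℤ × ℤ => gpt a σ T (lpt a mn) t x • (α - x)) :=
      hsg.smul_const _
    have hkey : (∑' mn : ℤ × ℤ, gpt a σ T (lpt a mn) t x • (lpt a mn - x)) - (α - x)
        = ∑' mn : ℤ × ℤ, gpt a σ T (lpt a mn) t x • (lpt a mn - α) := by
      have h2 : ∑' mn : ℤ × ℤ, gpt a σ T (lpt a mn) t x • (α - x) = α - x := by
        rw [Summable.tsum_smul_const hsg, hts1, one_smul]
      calc (∑' mn : ℤ × ℤ, gpt a σ T (lpt a mn) t x • (lpt a mn - x)) - (α - x)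
          = (∑' mn : ℤ × ℤ, gpt a σ T (lpt a mn) t x • (lpt a mn - x))
            - ∑' mn : ℤ × ℤ, gpt a σ T (lpt a mn) t x • (α - x) := by rw [h2]
        _ = ∑' mn : ℤ × ℤ, (gpt a σ T (lpt a mn) t x • (lpt a mn - x)
            - gpt a σ T (lpt a mn) t x • (α - x)) := (Summable.tsum_sub hsv hsc).symm
        _ = ∑' mn : ℤ × ℤ, gpt a σ T (lpt a mn) t x • (lpt a mn - α) :=
            tsum_congr fun mn => by rw [← smul_sub, sub_sub_sub_cancel_right]
    rw [hkey]
    have hgH : ∀ mn : ℤ × ℤ, gpt a σ T (lpt a mn) t x ≤ H t mn := by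
      intro mn
      have hle : Real.exp (-F0 / (2*σ^2*(T-t))) ≤ Zsum a σ T t x := by
        rw [hF0]
        exact Summable.le_tsum (hsume t ht) mn₀ fun j _ => Real.exp_nonneg _
      have hH' : H t mn = Real.exp (-‖lpt a mn - x‖^2/(2*σ^2*(T-t)))
          / Real.exp (-F0/(2*σ^2*(T-t))) := by
        simp only [hHdef]
        rw [← Real.exp_sub]
        congr 1; ring
      rw [hgdef mn, hH']
      exact div_le_div_of_nonneg_left (Real.exp_nonneg _) (Real.exp_pos _) hle
    have hnormsum : Summable (fun mn : ℤ × ℤ => ‖gpt a σ T (lpt a mn) t x • (lpt a mn - α)‖) :=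
      (hsgn α).congr fun mn => by
        rw [norm_smul, Real.norm_eq_abs, abs_of_nonneg (hgnn mn)]
    calc ‖∑' mn : ℤ × ℤ, gpt a σ T (lpt a mn) t x • (lpt a mn - α)‖
        ≤ ∑' mn : ℤ × ℤ, ‖gpt a σ T (lpt a mn) t x • (lpt a mn - α)‖ :=
          norm_tsum_le_tsum_norm hnormsum
      _ = ∑' mn : ℤ × ℤ, gpt a σ T (lpt a mn) t x * ‖lpt a mn - α‖ :=
          tsum_congr fun mn => by
            rw [norm_smul, Real.norm_eq_abs, abs_of_nonneg (hgnn mn)]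
      _ ≤ ∑' mn : ℤ × ℤ, H t mn * ‖lpt a mn - α‖ :=
          Summable.tsum_le_tsum (fun mn => mul_le_mul_of_nonneg_right (hgH mn) (norm_nonneg _))
            (hsgn α) (hWa t ht)
  exact ⟨parta, partb⟩
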